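/- The Killing vector fields of the McLenaghan–Tariq–Tupper metric satisfy the bracket relations [η₁, η_a] = 0 for every a ∈ {1,2,3,4}, [η₂, η₃] = k η₁, [η₂, η₄] = −(k/2) η₂, and [η₃, η₄] = (k/2) η₃, where the brackets are Lie brackets of vector fields on ℝ⁴. -/
import Mathlib


/-- Partial derivative `∂f/∂xⁱ` of a real-valued function on `ℝ⁴`. -/
noncomputable def pd (i : Fin 4) (f : (Fin 4 → ℝ) → ℝ) (x : Fin 4 → ℝ) : ℝ :=
  fderiv ℝ f x (Pi.single i 1)
/-- The Killing vector fields `η₁,…,η₄` (indices `0,…,3`). -/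
noncomputable def η (k : ℝ) (a : Fin 4) (x : Fin 4 → ℝ) : Fin 4 → ℝ :=
  ![![1, 0, 0, 0],
    ![0, 0, 0, 1],
    ![k * x 3, 0, 1, 0],
    ![-2, 1, k / 2 * x 2, -(k / 2) * x 3]] a
/-- The Lie bracket of vector fields on `ℝ⁴`: `[X,Y]^i = Σ_j (X^j ∂_j Y^i − Y^j ∂_j X^i)`. -/
noncomputable def lieBracket (X Y : (Fin 4 → ℝ) → Fin 4 → ℝ) (x : Fin 4 → ℝ) (i : Fin 4) : ℝ :=
  ∑ j : Fin 4, (X x j * pd j (fun y => Y y i) x - Y x j * pd j (fun y => X y i) x)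

lemma pd_const (i : Fin 4) (c : ℝ) (x : Fin 4 → ℝ) : pd i (fun _ => c) x = 0 := by
  simp [pd]

lemma pd_mul (i m : Fin 4) (c : ℝ) (x : Fin 4 → ℝ) :
    pd i (fun y => c * y m) x = if m = i then c else 0 := by
  have h1 : HasFDerivAt (fun y : Fin 4 → ℝ => y m)
      (ContinuousLinearMap.proj m : (Fin 4 → ℝ) →L[ℝ] ℝ) x :=
    hasFDerivAt_apply m x
  have h := h1.const_mul c
  simp [pd, h.fderiv, Pi.single_apply]

lemma pd_neg_mul (i m : Fin 4) (c : ℝ) (x : Fin 4 → ℝ) :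
    pd i (fun y => -(c * y m)) x = if m = i then -c else 0 := by
  rw [show (fun y : Fin 4 → ℝ => -(c * y m)) = fun y => (-c) * y m from
    funext fun y => by ring, pd_mul]

lemma pd_mul_right (i m : Fin 4) (c d : ℝ) (x : Fin 4 → ℝ) :
    pd i (fun y => c * y m * d) x = if m = i then c * d else 0 := by
  rw [show (fun y : Fin 4 → ℝ => c * y m * d) = fun y => (c * d) * y m from
    funext fun y => by ring, pd_mul]

/-- The Killing fields satisfy `[η₁,η_a] = 0`, `[η₂,η₃] = k η₁`,
`[η₂,η₄] = −(k/2) η₂`, `[η₃,η₄] = (k/2) η₃`. -/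
theorem eta_bracket_relations (k : ℝ) (hk : 0 < k) :
    (∀ a : Fin 4, ∀ x : Fin 4 → ℝ, ∀ i : Fin 4, lieBracket (η k 0) (η k a) x i = 0) ∧
    (∀ x : Fin 4 → ℝ, ∀ i : Fin 4, lieBracket (η k 1) (η k 2) x i = k * η k 0 x i) ∧
    (∀ x : Fin 4 → ℝ, ∀ i : Fin 4, lieBracket (η k 1) (η k 3) x i = -(k / 2) * η k 1 x i) ∧
    (∀ x : Fin 4 → ℝ, ∀ i : Fin 4, lieBracket (η k 2) (η k 3) x i = (k / 2) * η k 2 x i) := by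
  refine ⟨fun a x i => ?_, fun x i => ?_, fun x i => ?_, fun x i => ?_⟩
  · fin_cases a <;> fin_cases i <;>
      simp [lieBracket, η, Fin.sum_univ_four, pd_const, pd_mul, pd_neg_mul, pd_mul_right]
  all_goals fin_cases i <;>
    simp [lieBracket, η, Fin.sum_univ_four, pd_const, pd_mul, pd_neg_mul, pd_mul_right] <;> ring
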